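/- arXiv:nlin/0408041 — 12 statements merged into one kernel-verified Lean document; each statement's English description precedes it below -/
import Mathlib

section
/- Let y : ℝ → ℝ be four times differentiable with y''''(x) − 10·y(x)·y''(x) − 5·y'(x)² + 10·y(x)³ = 0 for all x. Then the function x ↦ y'(x)·y'''(x) − (1/2)·y''(x)² − 5·y(x)·y'(x)² + (5/2)·y(x)⁴ is constant on ℝ. -/
theorem stmt7 (y : ℝ → ℝ)
    (hd0 : Differentiable ℝ y) (hd1 : Differentiable ℝ (deriv y))
    (hd2 : Differentiable ℝ (deriv (deriv y)))
    (hd3 : Differentiable ℝ (deriv (deriv (deriv y))))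
    (hy : ∀ x : ℝ, deriv (deriv (deriv (deriv y))) x - 10 * y x * deriv (deriv y) x - 5 * (deriv y x) ^ 2 + 10 * y x ^ 3 = 0) :
    ∀ x₁ x₂ : ℝ, (deriv y x₁ * deriv (deriv (deriv y)) x₁ - (1/2) * (deriv (deriv y) x₁) ^ 2 - 5 * y x₁ * (deriv y x₁) ^ 2 + (5/2) * y x₁ ^ 4) = (deriv y x₂ * deriv (deriv (deriv y)) x₂ - (1/2) * (deriv (deriv y) x₂) ^ 2 - 5 * y x₂ * (deriv y x₂) ^ 2 + (5/2) * y x₂ ^ 4) := by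
  set F : ℝ → ℝ := fun x => deriv y x * deriv (deriv (deriv y)) x - (1/2) * (deriv (deriv y) x) ^ 2 - 5 * y x * (deriv y x) ^ 2 + (5/2) * y x ^ 4 with hF
  have key : ∀ x, HasDerivAt F 0 x := by
    intro x
    have h0 : HasDerivAt y (deriv y x) x := (hd0 x).hasDerivAt
    have h1 : HasDerivAt (deriv y) (deriv (deriv y) x) x := (hd1 x).hasDerivAt
    have h2 : HasDerivAt (deriv (deriv y)) (deriv (deriv (deriv y)) x) x := (hd2 x).hasDerivAt
    have h3 : HasDerivAt (deriv (deriv (deriv y))) (deriv (deriv (deriv (deriv y))) x) x := (hd3 x).hasDerivAt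
    have h := ((((h1.mul h3).sub (((h2.pow 2)).const_mul (1/2:ℝ))).sub
        ((h0.mul (h1.pow 2)).const_mul (5:ℝ))).add ((h0.pow 4).const_mul (5/2:ℝ))
      )
    have heq : F = fun x => deriv y x * deriv (deriv (deriv y)) x - 1 / 2 * deriv (deriv y) x ^ 2 - 5 * (y x * deriv y x ^ 2) + 5 / 2 * y x ^ 4 := by
      funext t; simp [F]; ring
    rw [heq]
    refine h.congr_deriv (Eq.symm ?_)
    have h4 := hy x
    push_cast [Pi.pow_apply]
    linear_combination (-(deriv y x)) * h4
  have hc : ∀ x₁ x₂ : ℝ, F x₁ = F x₂ := by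
    intro x₁ x₂
    have := is_const_of_deriv_eq_zero (f := F)
      (fun x => (key x).differentiableAt) (fun x => (key x).deriv) x₁ x₂
    exact this
  exact hc
end

section
/- Let β, δ, μ ∈ ℝ and let y : ℝ → ℝ be four times differentiable with y''''(x) − 10·y(x)·y''(x) − 5·y'(x)² + 10·y(x)³ + β·(y''(x) − 3·y(x)²) + δ·y(x) + μ = 0 for all x. Then the function x ↦ y'''(x)² − 12·y(x)·y'(x)·y'''(x) − 4·y(x)·y''(x)² + 2·y'(x)²·y''(x) + 20·y(x)³·y''(x) + 30·y(x)²·y'(x)² − 24·y(x)⁵ + β·(y''(x) − 3·y(x)²)² + δ·(2·y(x)·y''(x) − 4·y(x)³ − y'(x)²) + 2·μ·(y''(x) − 3·y(x)²) is constant on ℝ. -/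
theorem stmt9 (β δ μ : ℝ) (y : ℝ → ℝ)
    (hd0 : Differentiable ℝ y) (hd1 : Differentiable ℝ (deriv y))
    (hd2 : Differentiable ℝ (deriv (deriv y)))
    (hd3 : Differentiable ℝ (deriv (deriv (deriv y))))
    (hy : ∀ x : ℝ, deriv (deriv (deriv (deriv y))) x - 10 * y x * deriv (deriv y) x - 5 * (deriv y x) ^ 2 + 10 * y x ^ 3 + β * (deriv (deriv y) x - 3 * y x ^ 2) + δ * y x + μ = 0) :
    ∀ x₁ x₂ : ℝ, ((deriv (deriv (deriv y)) x₁) ^ 2 - 12 * y x₁ * deriv y x₁ * deriv (deriv (deriv y)) x₁ - 4 * y x₁ * (deriv (deriv y) x₁) ^ 2 + 2 * (deriv y x₁) ^ 2 * deriv (deriv y) x₁ + 20 * y x₁ ^ 3 * deriv (deriv y) x₁ + 30 * y x₁ ^ 2 * (deriv y x₁) ^ 2 - 24 * y x₁ ^ 5 + β * (deriv (deriv y) x₁ - 3 * y x₁ ^ 2) ^ 2 + δ * (2 * y x₁ * deriv (deriv y) x₁ - 4 * y x₁ ^ 3 - (deriv y x₁) ^ 2) + 2 * μ * (deriv (deriv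 y) x₁ - 3 * y x₁ ^ 2)) = ((deriv (deriv (deriv y)) x₂) ^ 2 - 12 * y x₂ * deriv y x₂ * deriv (deriv (deriv y)) x₂ - 4 * y x₂ * (deriv (deriv y) x₂) ^ 2 + 2 * (deriv y x₂) ^ 2 * deriv (deriv y) x₂ + 20 * y x₂ ^ 3 * deriv (deriv y) x₂ + 30 * y x₂ ^ 2 * (deriv y x₂) ^ 2 - 24 * y x₂ ^ 5 + β * (deriv (deriv y) x₂ - 3 * y x₂ ^ 2) ^ 2 + δ * (2 * y x₂ * deriv (deriv y) x₂ - 4 * y x₂ ^ 3 - (deriv y x₂) ^ 2) + 2 * μ * (deriv (deriv y) x₂ - 3 * y x₂ ^ 2)) := by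
  set F : ℝ → ℝ := fun x => (deriv (deriv (deriv y)) x) ^ 2 - 12 * y x * deriv y x * deriv (deriv (deriv y)) x - 4 * y x * (deriv (deriv y) x) ^ 2 + 2 * (deriv y x) ^ 2 * deriv (deriv y) x + 20 * y x ^ 3 * deriv (deriv y) x + 30 * y x ^ 2 * (deriv y x) ^ 2 - 24 * y x ^ 5 + β * (deriv (deriv y) x - 3 * y x ^ 2) ^ 2 + δ * (2 * y x * deriv (deriv y) x - 4 * y x ^ 3 - (deriv y x) ^ 2) + 2 * μ * (deriv (deriv y) x - 3 * y x ^ 2) with hF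
  have key : ∀ x : ℝ, HasDerivAt F 0 x := by
    intro x
    have h0 := (hd0 x).hasDerivAt
    have h1 := (hd1 x).hasDerivAt
    have h2 := (hd2 x).hasDerivAt
    have h3 := (hd3 x).hasDerivAt
    have H := (((((((((h3.pow 2).sub (((h0.const_mul (12:ℝ)).mul h1).mul h3)).sub
      ((h0.const_mul (4:ℝ)).mul (h2.pow 2))).add
      (((h1.pow 2).const_mul (2:ℝ)).mul h2)).add
      (((h0.pow 3).const_mul (20:ℝ)).mul h2)).add
      (((h0.pow 2).const_mul (30:ℝ)).mul (h1.pow 2))).sub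
      ((h0.pow 5).const_mul (24:ℝ))).add
      (((h2.sub ((h0.pow 2).const_mul (3:ℝ))).pow 2).const_mul β)).add
      (((((h0.const_mul (2:ℝ)).mul h2).sub ((h0.pow 3).const_mul (4:ℝ))).sub (h1.pow 2)).const_mul δ)).add
      ((h2.sub ((h0.pow 2).const_mul (3:ℝ))).const_mul (2*μ))
    refine H.congr_deriv (Eq.symm ?_)
    have hE := hy x
    push_cast
    simp only [Pi.pow_apply, Pi.mul_apply, Pi.sub_apply]
    linear_combination (-(2 * deriv (deriv (deriv y)) x) + 12 * y x * deriv y x) * hE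
  intro x₁ x₂
  exact is_const_of_deriv_eq_zero (fun x => (key x).differentiableAt)
    (fun x => (key x).deriv) x₁ x₂
end

section
/- Let β, δ, μ ∈ ℝ and let y : ℝ → ℝ be four times differentiable with y''''(x) − 10·y(x)²·y''(x) − 10·y(x)·y'(x)² + 6·y(x)⁵ + β·(y''(x) − 2·y(x)³) + δ·y(x) + μ = 0 for all x. Then the function x ↦ y'(x)·y'''(x) − (1/2)·y''(x)² − 5·y(x)²·y'(x)² + y(x)⁶ + (1/2)·β·(y'(x)² − y(x)⁴) + (1/2)·δ·y(x)² + μ·y(x) is constant on ℝ. -/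
theorem stmt10 (β δ μ : ℝ) (y : ℝ → ℝ)
    (hd0 : Differentiable ℝ y) (hd1 : Differentiable ℝ (deriv y))
    (hd2 : Differentiable ℝ (deriv (deriv y)))
    (hd3 : Differentiable ℝ (deriv (deriv (deriv y))))
    (hy : ∀ x : ℝ, deriv (deriv (deriv (deriv y))) x - 10 * y x ^ 2 * deriv (deriv y) x - 10 * y x * (deriv y x) ^ 2 + 6 * y x ^ 5 + β * (deriv (deriv y) x - 2 * y x ^ 3) + δ * y x + μ = 0) :
    ∀ x₁ x₂ : ℝ, (deriv y x₁ * deriv (deriv (deriv y)) x₁ - (1/2) * (deriv (deriv y) x₁) ^ 2 - 5 * y x₁ ^ 2 * (deriv y x₁) ^ 2 + y x₁ ^ 6 + (1/2) * β * ((deriv y x₁) ^ 2 - y x₁ ^ 4) + (1/2) * δ * y x₁ ^ 2 + μ * y x₁) = (deriv y x₂ * deriv (deriv (deriv y)) x₂ - (1/2) * (deriv (deriv y) x₂) ^ 2 - 5 * y x₂ ^ 2 * (deriv y x₂) ^ 2 + y x₂ ^ 6 + (1/2) * β * ((deriv y x₂) ^ 2 - y x₂ ^ 4) + (1/2) * δ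 * y x₂ ^ 2 + μ * y x₂) := by
  set F : ℝ → ℝ := fun x => deriv y x * deriv (deriv (deriv y)) x - (1/2) * (deriv (deriv y) x) ^ 2 - 5 * y x ^ 2 * (deriv y x) ^ 2 + y x ^ 6 + (1/2) * β * ((deriv y x) ^ 2 - y x ^ 4) + (1/2) * δ * y x ^ 2 + μ * y x with hF
  have key : ∀ x, HasDerivAt F 0 x := by
    intro x
    have h0 : HasDerivAt y (deriv y x) x := (hd0 x).hasDerivAt
    have h1 : HasDerivAt (deriv y) (deriv (deriv y) x) x := (hd1 x).hasDerivAt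
    have h2 : HasDerivAt (deriv (deriv y)) (deriv (deriv (deriv y)) x) x := (hd2 x).hasDerivAt
    have h3 : HasDerivAt (deriv (deriv (deriv y))) (deriv (deriv (deriv (deriv y))) x) x := (hd3 x).hasDerivAt
    have H : HasDerivAt F
        (deriv (deriv y) x * deriv (deriv (deriv y)) x + deriv y x * deriv (deriv (deriv (deriv y))) x
          - (1/2) * (2 * deriv (deriv y) x * deriv (deriv (deriv y)) x)
          - ((5 * (2 * y x * deriv y x)) * (deriv y x) ^ 2 + (5 * y x ^ 2) * (2 * deriv y x * deriv (deriv y) x))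
          + 6 * y x ^ 5 * deriv y x
          + (1/2) * β * (2 * deriv y x * deriv (deriv y) x - 4 * y x ^ 3 * deriv y x)
          + (1/2) * δ * (2 * y x * deriv y x) + μ * deriv y x) x := by
      have := ((((((h1.mul h3).sub (((h2.pow 2).const_mul (1/2:ℝ)))).sub
          (((h0.pow 2).const_mul (5:ℝ)).mul (h1.pow 2))).add (h0.pow 6)).add
          (((h1.pow 2).sub (h0.pow 4)).const_mul ((1/2)*β))).add
          ((h0.pow 2).const_mul ((1/2)*δ))).add (h0.const_mul μ)
      refine this.congr_deriv ?_
      simp only [Pi.pow_apply]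
      norm_num
    have hx := hy x
    convert H using 1
    linear_combination (-(deriv y x)) * hx
  intro x₁ x₂
  have := is_const_of_deriv_eq_zero (f := F)
    (fun x => (key x).differentiableAt) (fun x => (key x).deriv) x₁ x₂
  simpa [hF] using this
end

section
/- Let β, δ, μ ∈ ℝ and let y : ℝ → ℝ be four times differentiable with y''''(x) − 10·y(x)²·y''(x) − 10·y(x)·y'(x)² + 6·y(x)⁵ + β·(y''(x) − 2·y(x)³) + δ·y(x) + μ = 0 for all x. Then the function x ↦ y'''(x)² − 12·y(x)²·y'(x)·y'''(x) − 4·y(x)²·y''(x)² + 4·y(x)·y'(x)²·y''(x) + 12·y(x)⁵·y''(x) − y'(x)⁴ + 30·y(x)⁴·y'(x)² − 9·y(x)⁸ + β·(y''(x) − 2·y(x)³)² + δ·(2·y(x)·y''(x) − y'(x)² − 3·y(x)⁴) + 2·μ·(y''(x) − 2·y(x)³) is constant on ℝ. -/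
theorem stmt11 (β δ μ : ℝ) (y : ℝ → ℝ)
    (hd0 : Differentiable ℝ y) (hd1 : Differentiable ℝ (deriv y))
    (hd2 : Differentiable ℝ (deriv (deriv y)))
    (hd3 : Differentiable ℝ (deriv (deriv (deriv y))))
    (hy : ∀ x : ℝ, deriv (deriv (deriv (deriv y))) x - 10 * y x ^ 2 * deriv (deriv y) x - 10 * y x * (deriv y x) ^ 2 + 6 * y x ^ 5 + β * (deriv (deriv y) x - 2 * y x ^ 3) + δ * y x + μ = 0) :
    ∀ x₁ x₂ : ℝ, ((deriv (deriv (deriv y)) x₁) ^ 2 - 12 * y x₁ ^ 2 * deriv y x₁ * deriv (deriv (deriv y)) x₁ - 4 * y x₁ ^ 2 * (deriv (deriv y) x₁) ^ 2 + 4 * y x₁ * (deriv y x₁) ^ 2 * deriv (deriv y) x₁ + 12 * y x₁ ^ 5 * deriv (deriv y) x₁ - (deriv y x₁) ^ 4 + 30 * y x₁ ^ 4 * (deriv y x₁) ^ 2 - 9 * y x₁ ^ 8 + β * (deriv (deriv y) x₁ - 2 * y x₁ ^ 3) ^ 2 + δ * (2 * y x₁ * deriv (deriv y) x₁ - (deriv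 y x₁) ^ 2 - 3 * y x₁ ^ 4) + 2 * μ * (deriv (deriv y) x₁ - 2 * y x₁ ^ 3)) = ((deriv (deriv (deriv y)) x₂) ^ 2 - 12 * y x₂ ^ 2 * deriv y x₂ * deriv (deriv (deriv y)) x₂ - 4 * y x₂ ^ 2 * (deriv (deriv y) x₂) ^ 2 + 4 * y x₂ * (deriv y x₂) ^ 2 * deriv (deriv y) x₂ + 12 * y x₂ ^ 5 * deriv (deriv y) x₂ - (deriv y x₂) ^ 4 + 30 * y x₂ ^ 4 * (deriv y x₂) ^ 2 - 9 * y x₂ ^ 8 + β * (deriv (deriv y) x₂ - 2 * y x₂ ^ 3) ^ 2 + δ * (2 * y x₂ * deriv (deriv y) x₂ - (deriv y x₂) ^ 2 - 3 * y x₂ ^ 4) + 2 * μ * (deriv (deriv y) x₂ - 2 * y x₂ ^ 3)) := by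
  have key : ∀ x : ℝ, HasDerivAt (fun t : ℝ => (deriv (deriv (deriv y)) t) ^ 2 - 12 * y t ^ 2 * deriv y t * deriv (deriv (deriv y)) t - 4 * y t ^ 2 * (deriv (deriv y) t) ^ 2 + 4 * y t * (deriv y t) ^ 2 * deriv (deriv y) t + 12 * y t ^ 5 * deriv (deriv y) t - (deriv y t) ^ 4 + 30 * y t ^ 4 * (deriv y t) ^ 2 - 9 * y t ^ 8 + β * (deriv (deriv y) t - 2 * y t ^ 3) ^ 2 + δ * (2 * y t * deriv (deriv y) t - (deriv y t) ^ 2 - 3 * y t ^ 4) + 2 * μ * (deriv (deriv y) t - 2 * y t ^ 3)) 0 x := by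
    intro x
    have h0 : HasDerivAt y (deriv y x) x := (hd0 x).hasDerivAt
    have h1 : HasDerivAt (deriv y) (deriv (deriv y) x) x := (hd1 x).hasDerivAt
    have h2 : HasDerivAt (deriv (deriv y)) (deriv (deriv (deriv y)) x) x := (hd2 x).hasDerivAt
    have h3 : HasDerivAt (deriv (deriv (deriv y))) (deriv (deriv (deriv (deriv y))) x) x := (hd3 x).hasDerivAt
    have H := (((((((((((h3.pow 2).sub ((((h0.pow 2).const_mul 12).mul h1).mul h3)).sub
        (((h0.pow 2).const_mul 4).mul (h2.pow 2))).add
        (((h0.const_mul 4).mul (h1.pow 2)).mul h2)).add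
        (((h0.pow 5).const_mul 12).mul h2)).sub (h1.pow 4)).add
        (((h0.pow 4).const_mul 30).mul (h1.pow 2))).sub ((h0.pow 8).const_mul 9)).add
        (((h2.sub ((h0.pow 3).const_mul 2)).pow 2).const_mul β)).add
        (((((h0.const_mul 2).mul h2).sub (h1.pow 2)).sub ((h0.pow 4).const_mul 3)).const_mul δ)).add
        ((h2.sub ((h0.pow 3).const_mul 2)).const_mul (2 * μ)))
    refine H.congr_deriv (Eq.symm ?_)
    simp only [Pi.pow_apply, Pi.mul_apply, Pi.sub_apply]
    linear_combination (12 * y x ^ 2 * deriv y x - 2 * deriv (deriv (deriv y)) x) * hy x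
  intro x₁ x₂
  exact is_const_of_deriv_eq_zero (fun x => (key x).differentiableAt) (fun x => (key x).deriv) x₁ x₂
end

section
/- Let y : ℝ → ℝ be four times differentiable with y''''(x) − 10·y(x)²·y''(x) − 10·y(x)·y'(x)² + 6·y(x)⁵ = 0 for all x. Then the function x ↦ y'''(x)² − 12·y'''(x)·y'(x)·y(x)² − 4·y''(x)²·y(x)² + 4·y''(x)·y'(x)²·y(x) + 12·y''(x)·y(x)⁵ − y'(x)⁴ + 30·y'(x)²·y(x)⁴ − 9·y(x)⁸ is constant on ℝ. -/
theorem stmt12 (y : ℝ → ℝ)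
    (hd0 : Differentiable ℝ y) (hd1 : Differentiable ℝ (deriv y))
    (hd2 : Differentiable ℝ (deriv (deriv y)))
    (hd3 : Differentiable ℝ (deriv (deriv (deriv y))))
    (hy : ∀ x : ℝ, deriv (deriv (deriv (deriv y))) x - 10 * y x ^ 2 * deriv (deriv y) x - 10 * y x * (deriv y x) ^ 2 + 6 * y x ^ 5 = 0) :
    ∀ x₁ x₂ : ℝ, ((deriv (deriv (deriv y)) x₁) ^ 2 - 12 * y x₁ ^ 2 * deriv y x₁ * deriv (deriv (deriv y)) x₁ - 4 * y x₁ ^ 2 * (deriv (deriv y) x₁) ^ 2 + 4 * y x₁ * (deriv y x₁) ^ 2 * deriv (deriv y) x₁ + 12 * y x₁ ^ 5 * deriv (deriv y) x₁ - (deriv y x₁) ^ 4 + 30 * y x₁ ^ 4 * (deriv y x₁) ^ 2 - 9 * y x₁ ^ 8) = ((deriv (deriv (deriv y)) x₂) ^ 2 - 12 * y x₂ ^ 2 * deriv y x₂ * deriv (deriv (deriv y)) x₂ - 4 * y x₂ ^ 2 * (deriv (deriv y) x₂) ^ 2 + 4 * y x₂ * (deriv y x₂) ^ 2 * deriv (deriv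 y) x₂ + 12 * y x₂ ^ 5 * deriv (deriv y) x₂ - (deriv y x₂) ^ 4 + 30 * y x₂ ^ 4 * (deriv y x₂) ^ 2 - 9 * y x₂ ^ 8) := by
  have key : ∀ x : ℝ, HasDerivAt (fun x => (deriv (deriv (deriv y)) x) ^ 2 - 12 * y x ^ 2 * deriv y x * deriv (deriv (deriv y)) x - 4 * y x ^ 2 * (deriv (deriv y) x) ^ 2 + 4 * y x * (deriv y x) ^ 2 * deriv (deriv y) x + 12 * y x ^ 5 * deriv (deriv y) x - (deriv y x) ^ 4 + 30 * y x ^ 4 * (deriv y x) ^ 2 - 9 * y x ^ 8) 0 x := by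
    intro x
    have h0 := (hd0 x).hasDerivAt
    have h1 := (hd1 x).hasDerivAt
    have h2 := (hd2 x).hasDerivAt
    have h3 := (hd3 x).hasDerivAt
    have H := (((((((h3.pow 2).sub
        ((((h0.pow 2).const_mul 12).mul h1).mul h3)).sub
        (((h0.pow 2).const_mul 4).mul (h2.pow 2))).add
        (((h0.const_mul 4).mul (h1.pow 2)).mul h2)).add
        (((h0.pow 5).const_mul 12).mul h2)).sub (h1.pow 4)).add
        (((h0.pow 4).const_mul 30).mul (h1.pow 2))).sub ((h0.pow 8).const_mul 9)
    refine H.congr_deriv ?_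
    simp only [Pi.pow_apply, Pi.mul_apply]
    symm
    have hx := hy x
    linear_combination (12 * y x ^ 2 * deriv y x - 2 * deriv (deriv (deriv y)) x) * hx
  intro x₁ x₂
  exact is_const_of_deriv_eq_zero (fun x => (key x).differentiableAt)
    (fun x => (key x).deriv) x₁ x₂
end

section
/- Let δ ∈ ℝ and let y : ℝ → ℝ be four times differentiable with y''''(x) + 5·y'(x)·y''(x) − 5·y(x)²·y''(x) − 5·y(x)·y'(x)² + y(x)⁵ − δ = 0 for all x. Then the function x ↦ y'(x)·y'''(x) − (1/2)·y''(x)² − (5/2)·y(x)²·y'(x)² + (1/6)·y(x)⁶ + (5/3)·y'(x)³ − δ·y(x) is constant on ℝ. -/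
theorem stmt13 (δ : ℝ) (y : ℝ → ℝ)
    (hd0 : Differentiable ℝ y) (hd1 : Differentiable ℝ (deriv y))
    (hd2 : Differentiable ℝ (deriv (deriv y)))
    (hd3 : Differentiable ℝ (deriv (deriv (deriv y))))
    (hy : ∀ x : ℝ, deriv (deriv (deriv (deriv y))) x + 5 * deriv y x * deriv (deriv y) x - 5 * y x ^ 2 * deriv (deriv y) x - 5 * y x * (deriv y x) ^ 2 + y x ^ 5 - δ = 0) :
    ∀ x₁ x₂ : ℝ, (deriv y x₁ * deriv (deriv (deriv y)) x₁ - (1/2) * (deriv (deriv y) x₁) ^ 2 - (5/2) * y x₁ ^ 2 * (deriv y x₁) ^ 2 + (1/6) * y x₁ ^ 6 + (5/3) * (deriv y x₁) ^ 3 - δ * y x₁) = (deriv y x₂ * deriv (deriv (deriv y)) x₂ - (1/2) * (deriv (deriv y) x₂) ^ 2 - (5/2) * y x₂ ^ 2 * (deriv y x₂) ^ 2 + (1/6) * y x₂ ^ 6 + (5/3) * (deriv y x₂) ^ 3 - δ * y x₂) := by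
  set F : ℝ → ℝ := fun x => deriv y x * deriv (deriv (deriv y)) x - (1/2) * (deriv (deriv y) x) ^ 2 - (5/2) * y x ^ 2 * (deriv y x) ^ 2 + (1/6) * y x ^ 6 + (5/3) * (deriv y x) ^ 3 - δ * y x with hF
  have key : ∀ x : ℝ, HasDerivAt F 0 x := by
    intro x
    have h0 : HasDerivAt y (deriv y x) x := (hd0 x).hasDerivAt
    have h1 : HasDerivAt (deriv y) (deriv (deriv y) x) x := (hd1 x).hasDerivAt
    have h2 : HasDerivAt (deriv (deriv y)) (deriv (deriv (deriv y)) x) x := (hd2 x).hasDerivAt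
    have h3 : HasDerivAt (deriv (deriv (deriv y))) (deriv (deriv (deriv (deriv y))) x) x := (hd3 x).hasDerivAt
    have h := ((((h1.mul h3).sub (((h2.pow 2).const_mul (1/2:ℝ)))).sub
      ((((h0.pow 2).mul (h1.pow 2))).const_mul (5/2:ℝ))).add
      ((h0.pow 6).const_mul (1/6:ℝ))).add ((h1.pow 3).const_mul (5/3:ℝ))
    have h' := h.sub (h0.const_mul δ)
    convert h' using 1
    · rfl
    · rfl
    · funext t; simp only [hF, Pi.sub_apply, Pi.add_apply, Pi.mul_apply, Pi.pow_apply]; ring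
    · have := hy x
      have hd4 : deriv (deriv (deriv (deriv y))) x = δ - 5 * deriv y x * deriv (deriv y) x + 5 * y x ^ 2 * deriv (deriv y) x + 5 * y x * (deriv y x) ^ 2 - y x ^ 5 := by linarith
      rw [hd4]
      push_cast [Pi.pow_apply]
      ring
  have hc : ∀ x₁ x₂ : ℝ, F x₁ = F x₂ := by
    intro x₁ x₂
    have := is_const_of_deriv_eq_zero (f := F)
      (fun x => (key x).differentiableAt) (fun x => (key x).deriv) x₁ x₂
    exact this
  exact hc
end

section
/- Let y : ℝ → ℝ be four times differentiable with y''''(x) + 5·y'(x)·y''(x) − 5·y(x)²·y''(x) − 5·y(x)·y'(x)² + y(x)⁵ = 0 for all x. Then the function x ↦ y'''(x)³ + ((3/2)·y(x)⁴ − 9·y(x)²·y'(x))·y'''(x)² + ( ((15/2)·y'(x) − 3·y(x)²)·y''(x)² + 3·(y'(x)² − 2·y(x)²·y'(x) + y(x)⁴)·y(x)·y''(x) − 7·y'(x)⁴ − (9/2)·y(x)²·y'(x)³ + 30·y(x)⁴·y'(x)² − (17/2)·y(x)⁶·y'(x) )·y'''(x) − (15/8)·y''(x)⁴ + 2·y(x)³·y''(x)³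 + ((25/2)·y'(x)³ + 15·y(x)⁴·y'(x) − (117/4)·y(x)²·y'(x)² − (13/4)·y(x)⁶)·y''(x)² + (9·y(x)·y'(x)⁴ − 30·y(x)³·y'(x)³ + 36·y(x)⁵·y'(x)² − 18·y(x)⁷·y'(x) + 3·y(x)⁹)·y''(x) − (22/3)·y'(x)⁶ + (35/2)·y(x)²·y'(x)⁵ + (45/8)·y(x)⁴·y'(x)⁴ − (157/6)·y(x)⁶·y'(x)³ + (19/4)·y(x)⁸·y'(x)² + 3·y(x)¹⁰·y'(x) − (17/24)·y(x)¹² is constant on ℝ. -/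
theorem stmt14 (y : ℝ → ℝ)
    (hd0 : Differentiable ℝ y) (hd1 : Differentiable ℝ (deriv y))
    (hd2 : Differentiable ℝ (deriv (deriv y)))
    (hd3 : Differentiable ℝ (deriv (deriv (deriv y))))
    (hy : ∀ x : ℝ, deriv (deriv (deriv (deriv y))) x + 5 * deriv y x * deriv (deriv y) x - 5 * y x ^ 2 * deriv (deriv y) x - 5 * y x * (deriv y x) ^ 2 + y x ^ 5 = 0) :
    ∀ x₁ x₂ : ℝ, ((deriv (deriv (deriv y)) x₁) ^ 3 + ((3/2) * y x₁ ^ 4 - 9 * y x₁ ^ 2 * (deriv y x₁)) * (deriv (deriv (deriv y)) x₁) ^ 2 + (((15/2) * (deriv y x₁) - 3 * y x₁ ^ 2) * (deriv (deriv y) x₁) ^ 2 + 3 * ((deriv y x₁) ^ 2 - 2 * y x₁ ^ 2 * (deriv y x₁) + y x₁ ^ 4) * y x₁ * (deriv (deriv y) x₁) - 7 * (deriv y x₁) ^ 4 - (9/2) * y x₁ ^ 2 * (deriv y x₁) ^ 3 + 30 * y x₁ ^ 4 * (deriv y x₁) ^ 2 - (17/2) * y x₁ ^ 6 * (deriv y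 x₁)) * (deriv (deriv (deriv y)) x₁) - (15/8) * (deriv (deriv y) x₁) ^ 4 + 2 * y x₁ ^ 3 * (deriv (deriv y) x₁) ^ 3 + ((25/2) * (deriv y x₁) ^ 3 + 15 * y x₁ ^ 4 * (deriv y x₁) - (117/4) * y x₁ ^ 2 * (deriv y x₁) ^ 2 - (13/4) * y x₁ ^ 6) * (deriv (deriv y) x₁) ^ 2 + (9 * y x₁ * (deriv y x₁) ^ 4 - 30 * y x₁ ^ 3 * (deriv y x₁) ^ 3 + 36 * y x₁ ^ 5 * (deriv y x₁) ^ 2 - 18 * y x₁ ^ 7 * (deriv y x₁) + 3 * y x₁ ^ 9) * (deriv (deriv y) x₁) - (22/3) * (deriv y x₁) ^ 6 + (35/2) * y x₁ ^ 2 * (deriv y x₁) ^ 5 + (45/8) * y x₁ ^ 4 * (deriv y x₁) ^ 4 - (157/6) * y x₁ ^ 6 * (deriv y x₁) ^ 3 + (19/4) * y x₁ ^ 8 * (deriv y x₁) ^ 2 + 3 * y x₁ ^ 10 * (deriv y x₁) - (17/24) * y x₁ ^ 12) = ((deriv (deriv (deriv y)) x₂) ^ 3 + ((3/2) * y x₂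 ^ 4 - 9 * y x₂ ^ 2 * (deriv y x₂)) * (deriv (deriv (deriv y)) x₂) ^ 2 + (((15/2) * (deriv y x₂) - 3 * y x₂ ^ 2) * (deriv (deriv y) x₂) ^ 2 + 3 * ((deriv y x₂) ^ 2 - 2 * y x₂ ^ 2 * (deriv y x₂) + y x₂ ^ 4) * y x₂ * (deriv (deriv y) x₂) - 7 * (deriv y x₂) ^ 4 - (9/2) * y x₂ ^ 2 * (deriv y x₂) ^ 3 + 30 * y x₂ ^ 4 * (deriv y x₂) ^ 2 - (17/2) * y x₂ ^ 6 * (deriv y x₂)) * (deriv (deriv (deriv y)) x₂) - (15/8) * (deriv (deriv y) x₂) ^ 4 + 2 * y x₂ ^ 3 * (deriv (deriv y) x₂) ^ 3 + ((25/2) * (deriv y x₂) ^ 3 + 15 * y x₂ ^ 4 * (deriv y x₂) - (117/4) * y x₂ ^ 2 * (deriv y x₂) ^ 2 - (13/4) * y x₂ ^ 6) * (deriv (deriv y) x₂) ^ 2 + (9 * y x₂ * (deriv y x₂) ^ 4 - 30 * y x₂ ^ 3 * (deriv y x₂) ^ 3 + 36 * y x₂ ^ 5 * (deriv y x₂) ^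 2 - 18 * y x₂ ^ 7 * (deriv y x₂) + 3 * y x₂ ^ 9) * (deriv (deriv y) x₂) - (22/3) * (deriv y x₂) ^ 6 + (35/2) * y x₂ ^ 2 * (deriv y x₂) ^ 5 + (45/8) * y x₂ ^ 4 * (deriv y x₂) ^ 4 - (157/6) * y x₂ ^ 6 * (deriv y x₂) ^ 3 + (19/4) * y x₂ ^ 8 * (deriv y x₂) ^ 2 + 3 * y x₂ ^ 10 * (deriv y x₂) - (17/24) * y x₂ ^ 12) := by

  have key : ∀ x : ℝ, HasDerivAt (fun t => ((((((((((((((deriv (deriv (deriv y)) t) ^ 3 + ((((3/2) * (y t) ^ 4) - (((9) * (y t) ^ 2) * deriv y t)) * (deriv (deriv (deriv y)) t) ^ 2)) + ((((((((((15/2) * deriv y t) - ((3) * (y t) ^ 2)) * (deriv (deriv y) t) ^ 2) + ((((3) * (((deriv y t) ^ 2 - (((2) * (y t) ^ 2) * deriv y t)) + (y t) ^ 4)) * y t) * deriv (deriv y) t)) - ((7) * (deriv y t) ^ 4)) - (((9/2) * (y t) ^ 2) * (deriv y t) ^ 3)) + (((30) * (y t) ^ 4) * (deriv y t) ^ 2))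 - (((17/2) * (y t) ^ 6) * deriv y t)) * deriv (deriv (deriv y)) t)) - ((15/8) * (deriv (deriv y) t) ^ 4)) + (((2) * (y t) ^ 3) * (deriv (deriv y) t) ^ 3)) + ((((((25/2) * (deriv y t) ^ 3) + (((15) * (y t) ^ 4) * deriv y t)) - (((117/4) * (y t) ^ 2) * (deriv y t) ^ 2)) - ((13/4) * (y t) ^ 6)) * (deriv (deriv y) t) ^ 2)) + ((((((((9) * y t) * (deriv y t) ^ 4) - (((30) * (y t) ^ 3) * (deriv y t) ^ 3)) + (((36) * (y t) ^ 5) * (deriv y t) ^ 2)) - (((18) * (y t) ^ 7) * deriv y t)) + ((3) * (y t) ^ 9)) * deriv (deriv y) t)) - ((22/3) * (deriv y t) ^ 6)) + (((35/2) * (y t) ^ 2) * (deriv y t) ^ 5)) + (((45/8) * (y t) ^ 4) * (deriv y t) ^ 4)) - (((157/6) * (y t) ^ 6) * (deriv y t) ^ 3)) + (((19/4) * (y t) ^ 8) * (deriv y t) ^ 2)) + (((3) * (y t) ^ 10) * deriv y t)) - ((17/24) * (y t) ^ 12))) 0 x := by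
    intro x
    have h0 : HasDerivAt y (deriv y x) x := (hd0 x).hasDerivAt
    have h1 : HasDerivAt (deriv y) (deriv (deriv y) x) x := (hd1 x).hasDerivAt
    have h2 : HasDerivAt (deriv (deriv y)) (deriv (deriv (deriv y)) x) x := (hd2 x).hasDerivAt
    have h3 : HasDerivAt (deriv (deriv (deriv y))) (deriv (deriv (deriv (deriv y))) x) x := (hd3 x).hasDerivAt
    have H := ((((((((((((((h3.pow 3).add ((((hasDerivAt_const x ((3/2) : ℝ)).mul (h0.pow 4)).sub (((hasDerivAt_const x ((9) : ℝ)).mul (h0.pow 2)).mul h1)).mul (h3.pow 2))).add ((((((((((hasDerivAt_const x ((15/2) : ℝ)).mul h1).sub ((hasDerivAt_const x ((3) : ℝ)).mul (h0.pow 2))).mul (h2.pow 2)).add ((((hasDerivAt_const x ((3) : ℝ)).mul (((h1.pow 2).sub (((hasDerivAt_const x ((2) : ℝ)).mul (h0.pow 2)).mul h1)).add (h0.pow 4))).mul h0).mul h2)).sub ((hasDerivAt_const x ((7) : ℝ)).mul (h1.pow 4))).sub (((hasDerivAt_const x ((9/2) : ℝ)).mul (h0.pow 2)).mul (h1.pow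 3))).add (((hasDerivAt_const x ((30) : ℝ)).mul (h0.pow 4)).mul (h1.pow 2))).sub (((hasDerivAt_const x ((17/2) : ℝ)).mul (h0.pow 6)).mul h1)).mul h3)).sub ((hasDerivAt_const x ((15/8) : ℝ)).mul (h2.pow 4))).add (((hasDerivAt_const x ((2) : ℝ)).mul (h0.pow 3)).mul (h2.pow 3))).add ((((((hasDerivAt_const x ((25/2) : ℝ)).mul (h1.pow 3)).add (((hasDerivAt_const x ((15) : ℝ)).mul (h0.pow 4)).mul h1)).sub (((hasDerivAt_const x ((117/4) : ℝ)).mul (h0.pow 2)).mul (h1.pow 2))).sub ((hasDerivAt_const x ((13/4) : ℝ)).mul (h0.pow 6))).mul (h2.pow 2))).add ((((((((hasDerivAt_const x ((9) : ℝ)).mul h0).mul (h1.pow 4)).sub (((hasDerivAt_const x ((30) : ℝ)).mul (h0.pow 3)).mul (h1.pow 3))).add (((hasDerivAt_const x ((36) : ℝ)).mul (h0.pow 5)).mul (h1.pow 2))).sub (((hasDerivAt_const x ((18) : ℝ)).mul (h0.pow 7)).mul h1)).add ((hasDerivAt_const x ((3) : ℝ)).mul (h0.pow 9))).mul h2)).sub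 ((hasDerivAt_const x ((22/3) : ℝ)).mul (h1.pow 6))).add (((hasDerivAt_const x ((35/2) : ℝ)).mul (h0.pow 2)).mul (h1.pow 5))).add (((hasDerivAt_const x ((45/8) : ℝ)).mul (h0.pow 4)).mul (h1.pow 4))).sub (((hasDerivAt_const x ((157/6) : ℝ)).mul (h0.pow 6)).mul (h1.pow 3))).add (((hasDerivAt_const x ((19/4) : ℝ)).mul (h0.pow 8)).mul (h1.pow 2))).add (((hasDerivAt_const x ((3) : ℝ)).mul (h0.pow 10)).mul h1)).sub ((hasDerivAt_const x ((17/24) : ℝ)).mul (h0.pow 12)))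
    refine H.congr_deriv (Eq.symm ?_)
    have h4 := hy x
    simp only [Pi.mul_apply, Pi.pow_apply, Pi.add_apply, Pi.sub_apply]
    linear_combination (-(3 * (deriv (deriv (deriv y)) x) ^ 2 + 2 * ((3/2) * y x ^ 4 - 9 * y x ^ 2 * deriv y x) * deriv (deriv (deriv y)) x + (((15/2) * deriv y x - 3 * y x ^ 2) * (deriv (deriv y) x) ^ 2 + 3 * ((deriv y x) ^ 2 - 2 * y x ^ 2 * deriv y x + y x ^ 4) * y x * deriv (deriv y) x - 7 * (deriv y x) ^ 4 - (9/2) * y x ^ 2 * (deriv y x) ^ 3 + 30 * y x ^ 4 * (deriv y x) ^ 2 - (17/2) * y x ^ 6 * deriv y x))) * h4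
  intro x₁ x₂
  have hdF : Differentiable ℝ (fun t => ((((((((((((((deriv (deriv (deriv y)) t) ^ 3 + ((((3/2) * (y t) ^ 4) - (((9) * (y t) ^ 2) * deriv y t)) * (deriv (deriv (deriv y)) t) ^ 2)) + ((((((((((15/2) * deriv y t) - ((3) * (y t) ^ 2)) * (deriv (deriv y) t) ^ 2) + ((((3) * (((deriv y t) ^ 2 - (((2) * (y t) ^ 2) * deriv y t)) + (y t) ^ 4)) * y t) * deriv (deriv y) t)) - ((7) * (deriv y t) ^ 4)) - (((9/2) * (y t) ^ 2) * (deriv y t) ^ 3)) + (((30) * (y t) ^ 4) * (deriv y t) ^ 2)) - (((17/2) * (y t) ^ 6) * deriv y t)) * deriv (deriv (deriv y)) t)) - ((15/8) * (deriv (deriv y) t) ^ 4)) + (((2) * (y t) ^ 3) * (deriv (deriv y) t) ^ 3)) + ((((((25/2) * (deriv y t) ^ 3) + (((15) * (y t) ^ 4) * deriv y t)) - (((117/4) * (y t) ^ 2) * (deriv y t) ^ 2)) - ((13/4) * (y t) ^ 6)) * (deriv (deriv y) t) ^ 2)) + ((((((((9) * y t) * (deriv y t) ^ 4) - (((30) *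 (y t) ^ 3) * (deriv y t) ^ 3)) + (((36) * (y t) ^ 5) * (deriv y t) ^ 2)) - (((18) * (y t) ^ 7) * deriv y t)) + ((3) * (y t) ^ 9)) * deriv (deriv y) t)) - ((22/3) * (deriv y t) ^ 6)) + (((35/2) * (y t) ^ 2) * (deriv y t) ^ 5)) + (((45/8) * (y t) ^ 4) * (deriv y t) ^ 4)) - (((157/6) * (y t) ^ 6) * (deriv y t) ^ 3)) + (((19/4) * (y t) ^ 8) * (deriv y t) ^ 2)) + (((3) * (y t) ^ 10) * deriv y t)) - ((17/24) * (y t) ^ 12))) := fun x => (key x).differentiableAt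
  have := is_const_of_deriv_eq_zero hdF (fun x => (key x).deriv) x₁ x₂
  simpa using this
end

section
/- Let y : ℝ → ℝ be four times differentiable with y(x) ≠ 0 for all x, and suppose y''''(x) − 4·y'(x)·y'''(x)/y(x) + (21/2)·y'(x)²·y''(x)/y(x)² − 3·y''(x)²/y(x) − (9/2)·y'(x)⁴/y(x)³ = 0 for all x. Then the function x ↦ y'(x)·y'''(x)/y(x)² − (1/2)·y''(x)²/y(x)² − 2·y'(x)²·y''(x)/y(x)³ + (9/8)·y'(x)⁴/y(x)⁴ is constant on ℝ. -/
theorem stmt15 (y : ℝ → ℝ)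
    (hne : ∀ x : ℝ, y x ≠ 0)
    (hd0 : Differentiable ℝ y) (hd1 : Differentiable ℝ (deriv y))
    (hd2 : Differentiable ℝ (deriv (deriv y)))
    (hd3 : Differentiable ℝ (deriv (deriv (deriv y))))
    (hy : ∀ x : ℝ, deriv (deriv (deriv (deriv y))) x - 4 * deriv y x * deriv (deriv (deriv y)) x / y x + (21/2) * (deriv y x) ^ 2 * deriv (deriv y) x / y x ^ 2 - 3 * (deriv (deriv y) x) ^ 2 / y x - (9/2) * (deriv y x) ^ 4 / y x ^ 3 = 0) :
    ∀ x₁ x₂ : ℝ, (deriv y x₁ * deriv (deriv (deriv y)) x₁ / y x₁ ^ 2 - (1/2) * (deriv (deriv y) x₁) ^ 2 / y x₁ ^ 2 - 2 * (deriv y x₁) ^ 2 * deriv (deriv y) x₁ / y x₁ ^ 3 + (9/8) * (deriv y x₁) ^ 4 / y x₁ ^ 4) = (deriv y x₂ * deriv (deriv (deriv y)) x₂ / y x₂ ^ 2 - (1/2) * (deriv (deriv y) x₂) ^ 2 / y x₂ ^ 2 - 2 * (deriv y x₂) ^ 2 * deriv (deriv y) x₂ / y x₂ ^ 3 + (9/8)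 * (deriv y x₂) ^ 4 / y x₂ ^ 4) := by
  set F : ℝ → ℝ := fun x => deriv y x * deriv (deriv (deriv y)) x / y x ^ 2 -
      (1/2) * (deriv (deriv y) x) ^ 2 / y x ^ 2 -
      2 * (deriv y x) ^ 2 * deriv (deriv y) x / y x ^ 3 +
      (9/8) * (deriv y x) ^ 4 / y x ^ 4 with hF
  have key : ∀ x, HasDerivAt F 0 x := by
    intro x
    have ha := hne x
    have h0 : HasDerivAt y (deriv y x) x := (hd0 x).hasDerivAt
    have h1 : HasDerivAt (deriv y) (deriv (deriv y) x) x := (hd1 x).hasDerivAt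
    have h2 : HasDerivAt (deriv (deriv y)) (deriv (deriv (deriv y)) x) x := (hd2 x).hasDerivAt
    have h3 : HasDerivAt (deriv (deriv (deriv y))) (deriv (deriv (deriv (deriv y))) x) x :=
      (hd3 x).hasDerivAt
    have ha2 : y x ^ 2 ≠ 0 := pow_ne_zero 2 ha
    have ha3 : y x ^ 3 ≠ 0 := pow_ne_zero 3 ha
    have ha4 : y x ^ 4 ≠ 0 := pow_ne_zero 4 ha
    have H := ((((h1.mul h3).div (h0.pow 2) ha2).sub
        (((h2.pow 2).const_mul ((1:ℝ)/2)).div (h0.pow 2) ha2)).sub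
        ((((h1.pow 2).const_mul (2:ℝ)).mul h2).div (h0.pow 3) ha3)).add
        (((h1.pow 4).const_mul ((9:ℝ)/8)).div (h0.pow 4) ha4)
    refine H.congr_deriv ?_
    symm
    have heq := hy x
    simp only [Pi.pow_apply, Pi.mul_apply]
    norm_num
    field_simp at heq ⊢
    linear_combination (-4 * deriv y x) * heq
  intro x₁ x₂
  have := is_const_of_deriv_eq_zero (f := F)
    (fun x => (key x).differentiableAt) (fun x => (key x).deriv) x₁ x₂
  simpa [hF] using this
end

section
/- Let ν, δ, μ ∈ ℝ and let y : ℝ → ℝ be four times differentiable with y(x) ≠ 0 for all x, satisfying y''''(x) − 4·y'(x)·y'''(x)/y(x) + (21/2)·y'(x)²·y''(x)/y(x)² − 3·y''(x)²/y(x) − 5·δ·y''(x)/y(x)² − (9/2)·y'(x)⁴/y(x)³ + 10·δ·y'(x)²/y(x)³ + ν·y(x)² − 2·δ²/y(x)³ + μ = 0 for all x. Then the function x ↦ y'(x)·y'''(x)/y(x)² − (1/2)·y''(x)²/y(x)² − 2·y'(x)²·y''(x)/y(x)³ + (9/8)·y'(x)⁴/y(x)⁴ − (5/2)·δ·y'(x)²/y(x)⁴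 + (1/2)·δ²/y(x)⁴ − μ/y(x) + ν·y(x) is constant on ℝ. -/
set_option maxHeartbeats 2000000


theorem stmt16 (ν δ μ : ℝ) (y : ℝ → ℝ)
    (hne : ∀ x : ℝ, y x ≠ 0)
    (hd0 : Differentiable ℝ y) (hd1 : Differentiable ℝ (deriv y))
    (hd2 : Differentiable ℝ (deriv (deriv y)))
    (hd3 : Differentiable ℝ (deriv (deriv (deriv y))))
    (hy : ∀ x : ℝ, deriv (deriv (deriv (deriv y))) x - 4 * deriv y x * deriv (deriv (deriv y)) x / y x + (21/2) * (deriv y x) ^ 2 * deriv (deriv y) x / y x ^ 2 - 3 * (deriv (deriv y) x) ^ 2 / y x - 5 * δ * deriv (deriv y) x / y x ^ 2 - (9/2) * (deriv y x) ^ 4 / y x ^ 3 + 10 * δ * (deriv y x) ^ 2 / y x ^ 3 + ν * y x ^ 2 - 2 * δ ^ 2 / y x ^ 3 + μ = 0) :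
    ∀ x₁ x₂ : ℝ, (deriv y x₁ * deriv (deriv (deriv y)) x₁ / y x₁ ^ 2 - (1/2) * (deriv (deriv y) x₁) ^ 2 / y x₁ ^ 2 - 2 * (deriv y x₁) ^ 2 * deriv (deriv y) x₁ / y x₁ ^ 3 + (9/8) * (deriv y x₁) ^ 4 / y x₁ ^ 4 - (5/2) * δ * (deriv y x₁) ^ 2 / y x₁ ^ 4 + (1/2) * δ ^ 2 / y x₁ ^ 4 - μ / y x₁ + ν * y x₁) = (deriv y x₂ * deriv (deriv (deriv y)) x₂ / y x₂ ^ 2 - (1/2) * (deriv (deriv y) x₂) ^ 2 / y x₂ ^ 2 - 2 * (deriv y x₂) ^ 2 * deriv (deriv y) x₂ / y x₂ ^ 3 + (9/8) * (deriv y x₂) ^ 4 / y x₂ ^ 4 - (5/2) * δ * (deriv y x₂) ^ 2 / y x₂ ^ 4 + (1/2) * δ ^ 2 / y x₂ ^ 4 - μ / y x₂ + ν * y x₂) := by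
  set F : ℝ → ℝ := fun t => deriv y t * deriv (deriv (deriv y)) t / y t ^ 2 -
      (1/2) * (deriv (deriv y) t) ^ 2 / y t ^ 2 -
      2 * (deriv y t) ^ 2 * deriv (deriv y) t / y t ^ 3 +
      (9/8) * (deriv y t) ^ 4 / y t ^ 4 - (5/2) * δ * (deriv y t) ^ 2 / y t ^ 4 +
      (1/2) * δ ^ 2 / y t ^ 4 - μ / y t + ν * y t with hF
  have key : ∀ x : ℝ, HasDerivAt F 0 x := by
    intro x
    have ha : y x ≠ 0 := hne x
    have Hy : HasDerivAt y (deriv y x) x := (hd0 x).hasDerivAt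
    have H1 : HasDerivAt (deriv y) (deriv (deriv y) x) x := (hd1 x).hasDerivAt
    have H2 : HasDerivAt (deriv (deriv y)) (deriv (deriv (deriv y)) x) x := (hd2 x).hasDerivAt
    have H3 : HasDerivAt (deriv (deriv (deriv y))) (deriv (deriv (deriv (deriv y))) x) x :=
      (hd3 x).hasDerivAt
    have hpow2 : y x ^ 2 ≠ 0 := pow_ne_zero 2 ha
    have hpow3 : y x ^ 3 ≠ 0 := pow_ne_zero 3 ha
    have hpow4 : y x ^ 4 ≠ 0 := pow_ne_zero 4 ha
    have T1 := (H1.mul H3).div (Hy.pow 2) hpow2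
    have T2 := ((H2.pow 2).const_mul (1/2 : ℝ)).div (Hy.pow 2) hpow2
    have T3 := (((H1.pow 2).const_mul (2 : ℝ)).mul H2).div (Hy.pow 3) hpow3
    have T4 := ((H1.pow 4).const_mul (9/8 : ℝ)).div (Hy.pow 4) hpow4
    have T5 := ((H1.pow 2).const_mul ((5/2) * δ)).div (Hy.pow 4) hpow4
    have T6 := (hasDerivAt_const x ((1/2) * δ ^ 2 : ℝ)).div (Hy.pow 4) hpow4
    have T7 := (hasDerivAt_const x μ).div Hy ha
    have T8 := Hy.const_mul ν
    have H := ((((((T1.sub T2).sub T3).add T4).sub T5).add T6).sub T7).add T8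
    convert H using 1
    · rfl
    · rfl
    · rfl
    have he := hy x
    have h4 : deriv (deriv (deriv (deriv y))) x =
        4 * deriv y x * deriv (deriv (deriv y)) x / y x -
        (21/2) * (deriv y x) ^ 2 * deriv (deriv y) x / y x ^ 2 +
        3 * (deriv (deriv y) x) ^ 2 / y x + 5 * δ * deriv (deriv y) x / y x ^ 2 +
        (9/2) * (deriv y x) ^ 4 / y x ^ 3 - 10 * δ * (deriv y x) ^ 2 / y x ^ 3 -
        ν * y x ^ 2 + 2 * δ ^ 2 / y x ^ 3 - μ := by linarith
    rw [h4]
    simp only [Pi.pow_apply, Pi.mul_apply, Pi.div_apply, Pi.add_apply, Pi.sub_apply]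
    field_simp
    ring
  have hdF : Differentiable ℝ F := fun x => (key x).differentiableAt
  intro x₁ x₂
  exact is_const_of_deriv_eq_zero hdF (fun x => (key x).deriv) x₁ x₂
end

section
/- Let y : ℝ → ℝ be four times differentiable with y(x) ≠ 0 for all x, and suppose y''''(x) − 4·y'(x)·y'''(x)/y(x) + (21/2)·y'(x)²·y''(x)/y(x)² − 3·y''(x)²/y(x) − (9/2)·y'(x)⁴/y(x)³ = 0 for all x. Then the function x ↦ y'''(x)²/y(x)² − 6·y'(x)·y''(x)·y'''(x)/y(x)³ + 3·y'(x)³·y'''(x)/y(x)⁴ + 9·y'(x)²·y''(x)²/y(x)⁴ − 9·y'(x)⁴·y''(x)/y(x)⁵ + (9/4)·y'(x)⁶/y(x)⁶ is constant on ℝ. -/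
set_option maxHeartbeats 2000000 in
theorem stmt17 (y : ℝ → ℝ)
    (hne : ∀ x : ℝ, y x ≠ 0)
    (hd0 : Differentiable ℝ y) (hd1 : Differentiable ℝ (deriv y))
    (hd2 : Differentiable ℝ (deriv (deriv y)))
    (hd3 : Differentiable ℝ (deriv (deriv (deriv y))))
    (hy : ∀ x : ℝ, deriv (deriv (deriv (deriv y))) x - 4 * deriv y x * deriv (deriv (deriv y)) x / y x + (21/2) * (deriv y x) ^ 2 * deriv (deriv y) x / y x ^ 2 - 3 * (deriv (deriv y) x) ^ 2 / y x - (9/2) * (deriv y x) ^ 4 / y x ^ 3 = 0) :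
    ∀ x₁ x₂ : ℝ, ((deriv (deriv (deriv y)) x₁) ^ 2 / y x₁ ^ 2 - 6 * deriv y x₁ * deriv (deriv y) x₁ * deriv (deriv (deriv y)) x₁ / y x₁ ^ 3 + 3 * (deriv y x₁) ^ 3 * deriv (deriv (deriv y)) x₁ / y x₁ ^ 4 + 9 * (deriv y x₁) ^ 2 * (deriv (deriv y) x₁) ^ 2 / y x₁ ^ 4 - 9 * (deriv y x₁) ^ 4 * deriv (deriv y) x₁ / y x₁ ^ 5 + (9/4) * (deriv y x₁) ^ 6 / y x₁ ^ 6) = ((deriv (deriv (deriv y)) x₂) ^ 2 / y x₂ ^ 2 - 6 * deriv y x₂ * deriv (deriv y) x₂ * deriv (deriv (deriv y)) x₂ / y x₂ ^ 3 + 3 * (deriv y x₂) ^ 3 * deriv (deriv (deriv y)) x₂ / y x₂ ^ 4 + 9 * (deriv y x₂) ^ 2 * (deriv (deriv y) x₂) ^ 2 / y x₂ ^ 4 - 9 * (deriv y x₂) ^ 4 * deriv (deriv y) x₂ / y x₂ ^ 5 + (9/4) * (deriv y x₂) ^ 6 / y x₂ ^ 6) := by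
  set F : ℝ → ℝ := fun x => (deriv (deriv (deriv y)) x) ^ 2 / y x ^ 2
      - 6 * deriv y x * deriv (deriv y) x * deriv (deriv (deriv y)) x / y x ^ 3
      + 3 * (deriv y x) ^ 3 * deriv (deriv (deriv y)) x / y x ^ 4
      + 9 * (deriv y x) ^ 2 * (deriv (deriv y) x) ^ 2 / y x ^ 4
      - 9 * (deriv y x) ^ 4 * deriv (deriv y) x / y x ^ 5
      + (9/4) * (deriv y x) ^ 6 / y x ^ 6 with hF
  have key : ∀ x : ℝ, HasDerivAt F 0 x := by
    intro x
    have hy0 : y x ≠ 0 := hne x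
    have h0 : HasDerivAt y (deriv y x) x := (hd0 x).hasDerivAt
    have h1 : HasDerivAt (deriv y) (deriv (deriv y) x) x := (hd1 x).hasDerivAt
    have h2 : HasDerivAt (deriv (deriv y)) (deriv (deriv (deriv y)) x) x := (hd2 x).hasDerivAt
    have h3 : HasDerivAt (deriv (deriv (deriv y))) (deriv (deriv (deriv (deriv y))) x) x :=
      (hd3 x).hasDerivAt
    set u0 := y x
    set u1 := deriv y x
    set u2 := deriv (deriv y) x
    set u3 := deriv (deriv (deriv y)) x
    set u4 := deriv (deriv (deriv (deriv y))) x
    have hu4 : u4 = 4 * u1 * u3 / u0 - (21/2) * u1 ^ 2 * u2 / u0 ^ 2 + 3 * u2 ^ 2 / u0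
        + (9/2) * u1 ^ 4 / u0 ^ 3 := by
      have h := hy x
      linarith
    have hden2 : u0 ^ 2 ≠ 0 := pow_ne_zero _ hy0
    have hden3 : u0 ^ 3 ≠ 0 := pow_ne_zero _ hy0
    have hden4 : u0 ^ 4 ≠ 0 := pow_ne_zero _ hy0
    have hden5 : u0 ^ 5 ≠ 0 := pow_ne_zero _ hy0
    have hden6 : u0 ^ 6 ≠ 0 := pow_ne_zero _ hy0
    have H := (((((((h3.pow 2).div (h0.pow 2) hden2).sub
        ((((h1.const_mul 6).mul h2).mul h3).div (h0.pow 3) hden3)).add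
        ((((h1.pow 3).const_mul 3).mul h3).div (h0.pow 4) hden4)).add
        ((((h1.pow 2).const_mul 9).mul (h2.pow 2)).div (h0.pow 4) hden4)).sub
        ((((h1.pow 4).const_mul 9).mul h2).div (h0.pow 5) hden5)).add
        (((h1.pow 6).const_mul (9/4)).div (h0.pow 6) hden6))
    refine H.congr_deriv ?_
    rw [hu4]
    norm_num
    field_simp
    ring
  have hdiff : Differentiable ℝ F := fun x => (key x).differentiableAt
  have hderiv : ∀ x : ℝ, deriv F x = 0 := fun x => (key x).deriv
  intro x₁ x₂
  exact is_const_of_deriv_eq_zero hdiff hderiv x₁ x₂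
end

section
/- Let β, μ ∈ ℝ and let y : ℝ → ℝ be four times differentiable with y(x) ≠ 0 for all x, satisfying y''''(x) − 2·y'''(x)·y'(x)/y(x) − (3/2)·y''(x)²/y(x) + 2·y''(x)·y'(x)²/y(x)² − 5·y(x)²·y''(x) − (5/2)·y(x)·y'(x)² + (5/2)·y(x)⁵ − β·y(x)³ + μ·y(x) = 0 for all x. Then the function x ↦ y'(x)·y'''(x)/y(x) − (1/2)·y''(x)²/y(x) − y'(x)²·y''(x)/y(x)² − (5/2)·y(x)·y'(x)² + (1/2)·y(x)⁵ − (1/3)·β·y(x)³ + μ·y(x) is constant on ℝ. -/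
theorem stmt18 (β μ : ℝ) (y : ℝ → ℝ)
    (hne : ∀ x : ℝ, y x ≠ 0)
    (hd0 : Differentiable ℝ y) (hd1 : Differentiable ℝ (deriv y))
    (hd2 : Differentiable ℝ (deriv (deriv y)))
    (hd3 : Differentiable ℝ (deriv (deriv (deriv y))))
    (hy : ∀ x : ℝ, deriv (deriv (deriv (deriv y))) x - 2 * deriv (deriv (deriv y)) x * deriv y x / y x - (3/2) * (deriv (deriv y) x) ^ 2 / y x + 2 * deriv (deriv y) x * (deriv y x) ^ 2 / y x ^ 2 - 5 * y x ^ 2 * deriv (deriv y) x - (5/2) * y x * (deriv y x) ^ 2 + (5/2) * y x ^ 5 - β * y x ^ 3 + μ * y x = 0) :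
    ∀ x₁ x₂ : ℝ, (deriv y x₁ * deriv (deriv (deriv y)) x₁ / y x₁ - (1/2) * (deriv (deriv y) x₁) ^ 2 / y x₁ - (deriv y x₁) ^ 2 * deriv (deriv y) x₁ / y x₁ ^ 2 - (5/2) * y x₁ * (deriv y x₁) ^ 2 + (1/2) * y x₁ ^ 5 - (1/3) * β * y x₁ ^ 3 + μ * y x₁) = (deriv y x₂ * deriv (deriv (deriv y)) x₂ / y x₂ - (1/2) * (deriv (deriv y) x₂) ^ 2 / y x₂ - (deriv y x₂) ^ 2 * deriv (deriv y) x₂ / y x₂ ^ 2 - (5/2) * y x₂ * (deriv y x₂) ^ 2 + (1/2) * y x₂ ^ 5 - (1/3) * β * y x₂ ^ 3 + μ * y x₂) := by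
  set F : ℝ → ℝ := fun x => deriv y x * deriv (deriv (deriv y)) x / y x
      - (1/2) * (deriv (deriv y) x) ^ 2 / y x
      - (deriv y x) ^ 2 * deriv (deriv y) x / y x ^ 2
      - (5/2) * y x * (deriv y x) ^ 2 + (1/2) * y x ^ 5
      - (1/3) * β * y x ^ 3 + μ * y x with hF
  have key : ∀ x : ℝ, HasDerivAt F 0 x := by
    intro x
    have h0 : HasDerivAt y (deriv y x) x := (hd0 x).hasDerivAt
    have h1 : HasDerivAt (deriv y) (deriv (deriv y) x) x := (hd1 x).hasDerivAt
    have h2 : HasDerivAt (deriv (deriv y)) (deriv (deriv (deriv y)) x) x := (hd2 x).hasDerivAt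
    have h3 : HasDerivAt (deriv (deriv (deriv y))) (deriv (deriv (deriv (deriv y))) x) x :=
      (hd3 x).hasDerivAt
    have ha : y x ≠ 0 := hne x
    have t1 := (h1.mul h3).div h0 ha
    have t2 := ((h2.pow 2).const_mul (1/2 : ℝ)).div h0 ha
    have t3 := ((h1.pow 2).mul h2).div (h0.pow 2) (pow_ne_zero 2 ha)
    have t4 := (h0.mul (h1.pow 2)).const_mul (5/2 : ℝ)
    have t5 := (h0.pow 5).const_mul (1/2 : ℝ)
    have t6 := (h0.pow 3).const_mul ((1/3 : ℝ) * β)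
    have t7 := h0.const_mul μ
    have H := (((((t1.sub t2).sub t3).sub t4).add t5).sub t6).add t7
    convert H using 1
    · rfl
    · rfl
    · rw [hF]; funext t; simp only [Pi.add_apply, Pi.sub_apply, Pi.mul_apply, Pi.div_apply, Pi.pow_apply]; ring
    have hode := hy x
    have h4 : deriv (deriv (deriv (deriv y))) x =
        2 * deriv (deriv (deriv y)) x * deriv y x / y x
        + (3/2) * (deriv (deriv y) x) ^ 2 / y x
        - 2 * deriv (deriv y) x * (deriv y x) ^ 2 / y x ^ 2
        + 5 * y x ^ 2 * deriv (deriv y) x + (5/2) * y x * (deriv y x) ^ 2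
        - (5/2) * y x ^ 5 + β * y x ^ 3 - μ * y x := by linarith
    rw [h4]
    simp only [Pi.add_apply, Pi.sub_apply, Pi.mul_apply, Pi.div_apply, Pi.pow_apply]
    field_simp
    ring
  intro x₁ x₂
  exact is_const_of_deriv_eq_zero (fun x => (key x).differentiableAt)
    (fun x => (key x).deriv) x₁ x₂
end

section
/- Let β, μ ∈ ℝ and let y : ℝ → ℝ be four times differentiable with y(x) ≠ 0 for all x, satisfying y''''(x) − 2·y'''(x)·y'(x)/y(x) − (3/2)·y''(x)²/y(x) + 2·y''(x)·y'(x)²/y(x)² − 5·y(x)²·y''(x) − (5/2)·y(x)·y'(x)² + (5/2)·y(x)⁵ − β·y(x)³ + μ·y(x) = 0 for all x. Then the function x ↦ y'''(x)²/y(x)² − 2·y'(x)·y''(x)·y'''(x)/y(x)³ − 8·y'''(x)·y'(x) − (1/3)·y''(x)³/y(x)³ + y'(x)²·y''(x)²/y(x)⁴ + 11·y'(x)²·y''(x)/y(x) − y''(x)² + 5·y(x)³·y''(x) + 10·y(x)²·y'(x)² − (10/3)·y(x)⁶ + 2·μ·y''(x)/y(x) − 4·μ·y(x)² − 2·β·y(x)·y''(x)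 + 2·β·y'(x)² + 2·β·y(x)⁴ is constant on ℝ. -/
set_option maxHeartbeats 4000000 in
theorem stmt19 (β μ : ℝ) (y : ℝ → ℝ)
    (hne : ∀ x : ℝ, y x ≠ 0)
    (hd0 : Differentiable ℝ y) (hd1 : Differentiable ℝ (deriv y))
    (hd2 : Differentiable ℝ (deriv (deriv y)))
    (hd3 : Differentiable ℝ (deriv (deriv (deriv y))))
    (hy : ∀ x : ℝ, deriv (deriv (deriv (deriv y))) x - 2 * deriv (deriv (deriv y)) x * deriv y x / y x - (3/2) * (deriv (deriv y) x) ^ 2 / y x + 2 * deriv (deriv y) x * (deriv y x) ^ 2 / y x ^ 2 - 5 * y x ^ 2 * deriv (deriv y) x - (5/2) * y x * (deriv y x) ^ 2 + (5/2) * y x ^ 5 - β * y x ^ 3 + μ * y x = 0) :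
    ∀ x₁ x₂ : ℝ, ((deriv (deriv (deriv y)) x₁) ^ 2 / y x₁ ^ 2 - 2 * deriv y x₁ * deriv (deriv y) x₁ * deriv (deriv (deriv y)) x₁ / y x₁ ^ 3 - 8 * deriv (deriv (deriv y)) x₁ * deriv y x₁ - (1/3) * (deriv (deriv y) x₁) ^ 3 / y x₁ ^ 3 + (deriv y x₁) ^ 2 * (deriv (deriv y) x₁) ^ 2 / y x₁ ^ 4 + 11 * (deriv y x₁) ^ 2 * deriv (deriv y) x₁ / y x₁ - (deriv (deriv y) x₁) ^ 2 + 5 * y x₁ ^ 3 * deriv (deriv y) x₁ + 10 * y x₁ ^ 2 * (deriv y x₁) ^ 2 - (10/3) * y x₁ ^ 6 + 2 * μ * deriv (deriv y) x₁ / y x₁ - 4 * μ * y x₁ ^ 2 - 2 * β * y x₁ * deriv (deriv y) x₁ + 2 * β * (deriv y x₁) ^ 2 + 2 * β * y x₁ ^ 4) = ((deriv (deriv (deriv y)) x₂) ^ 2 / y x₂ ^ 2 - 2 * deriv y x₂ * deriv (deriv y) x₂ * deriv (deriv (deriv y)) x₂ / y x₂ ^ 3 - 8 * deriv (deriv (deriv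 y)) x₂ * deriv y x₂ - (1/3) * (deriv (deriv y) x₂) ^ 3 / y x₂ ^ 3 + (deriv y x₂) ^ 2 * (deriv (deriv y) x₂) ^ 2 / y x₂ ^ 4 + 11 * (deriv y x₂) ^ 2 * deriv (deriv y) x₂ / y x₂ - (deriv (deriv y) x₂) ^ 2 + 5 * y x₂ ^ 3 * deriv (deriv y) x₂ + 10 * y x₂ ^ 2 * (deriv y x₂) ^ 2 - (10/3) * y x₂ ^ 6 + 2 * μ * deriv (deriv y) x₂ / y x₂ - 4 * μ * y x₂ ^ 2 - 2 * β * y x₂ * deriv (deriv y) x₂ + 2 * β * (deriv y x₂) ^ 2 + 2 * β * y x₂ ^ 4)   := by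
  set y1 := deriv y with hy1
  set y2 := deriv y1 with hy2
  set y3 := deriv y2 with hy3
  set y4 := deriv y3 with hy4
  set F : ℝ → ℝ := fun t =>
    (y3 t ^ 2 * y t ^ 2 - 2 * (y1 t * y2 t * y3 t * y t) - 8 * (y3 t * y1 t * y t ^ 4)
      - 1/3 * (y2 t ^ 3 * y t) + y1 t ^ 2 * y2 t ^ 2 + 11 * (y1 t ^ 2 * y2 t * y t ^ 3)
      - y2 t ^ 2 * y t ^ 4 + 5 * (y t ^ 7 * y2 t) + 10 * (y t ^ 6 * y1 t ^ 2)
      - 10/3 * y t ^ 10 + 2*μ * (y2 t * y t ^ 3) - 4*μ * y t ^ 6 - 2*β * (y t ^ 5 * y2 t)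
      + 2*β * (y1 t ^ 2 * y t ^ 4) + 2*β * y t ^ 8) / y t ^ 4 with hF
  have key : ∀ x : ℝ, HasDerivAt F 0 x := by
    intro x
    have h0 : HasDerivAt y (y1 x) x := (hd0 x).hasDerivAt
    have h1 : HasDerivAt y1 (y2 x) x := (hd1 x).hasDerivAt
    have h2 : HasDerivAt y2 (y3 x) x := (hd2 x).hasDerivAt
    have h3 : HasDerivAt y3 (y4 x) x := (hd3 x).hasDerivAt
    have t1 := (h3.pow 2).mul (h0.pow 2)
    have t2 := (((h1.mul h2).mul h3).mul h0).const_mul (2:ℝ)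
    have t3 := ((h3.mul h1).mul (h0.pow 4)).const_mul (8:ℝ)
    have t4 := ((h2.pow 3).mul h0).const_mul ((1:ℝ)/3)
    have t5 := (h1.pow 2).mul (h2.pow 2)
    have t6 := (((h1.pow 2).mul h2).mul (h0.pow 3)).const_mul (11:ℝ)
    have t7 := (h2.pow 2).mul (h0.pow 4)
    have t8 := ((h0.pow 7).mul h2).const_mul (5:ℝ)
    have t9 := ((h0.pow 6).mul (h1.pow 2)).const_mul (10:ℝ)
    have t10 := (h0.pow 10).const_mul ((10:ℝ)/3)
    have t11 := (h2.mul (h0.pow 3)).const_mul (2*μ)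
    have t12 := (h0.pow 6).const_mul (4*μ)
    have t13 := ((h0.pow 5).mul h2).const_mul (2*β)
    have t14 := ((h1.pow 2).mul (h0.pow 4)).const_mul (2*β)
    have t15 := (h0.pow 8).const_mul (2*β)
    have hN := ((((((((((((((t1.sub t2).sub t3).sub t4).add t5).add t6).sub t7).add t8).add t9).sub t10).add t11).sub t12).sub t13).add t14).add t15)
    have hdiv := hN.div (h0.pow 4) (pow_ne_zero 4 (hne x))
    have hu := hne x
    have he : y4 x = 2 * y3 x * y1 x / y x + (3/2) * (y2 x) ^ 2 / y x
        - 2 * y2 x * (y1 x) ^ 2 / y x ^ 2 + 5 * y x ^ 2 * y2 x + (5/2) * y x * (y1 x) ^ 2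
        - (5/2) * y x ^ 5 + β * y x ^ 3 - μ * y x := by
      have hx := hy x
      linarith
    refine hdiv.congr_deriv ?_
    rw [he]
    simp only [Pi.pow_apply, Pi.mul_apply, Pi.sub_apply, Pi.add_apply]
    field_simp
    ring
  have hFd : Differentiable ℝ F := fun x => (key x).differentiableAt
  have hconst := is_const_of_deriv_eq_zero hFd (fun x => (key x).deriv)
  intro x₁ x₂
  have hrepr : ∀ x : ℝ, (y3 x ^ 2 / y x ^ 2 - 2 * y1 x * y2 x * y3 x / y x ^ 3
      - 8 * y3 x * y1 x - 1/3 * y2 x ^ 3 / y x ^ 3 + y1 x ^ 2 * y2 x ^ 2 / y x ^ 4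
      + 11 * y1 x ^ 2 * y2 x / y x - y2 x ^ 2 + 5 * y x ^ 3 * y2 x + 10 * y x ^ 2 * y1 x ^ 2
      - 10/3 * y x ^ 6 + 2 * μ * y2 x / y x - 4 * μ * y x ^ 2 - 2 * β * y x * y2 x
      + 2 * β * y1 x ^ 2 + 2 * β * y x ^ 4) = F x := by
    intro x
    have hu := hne x
    rw [hF]
    field_simp
  rw [hrepr x₁, hrepr x₂]
  exact hconst x₁ x₂
end
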